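/- In the two-state example, the normalized Q-learning prediction Q₁₁/(Q₁₁+Q₁₂) = (2-λ+γλ)/(4-2λ+3γλ) differs from the normalized true discounted occupancy p_+(s₁|s₁) = (2-2γ)/(2-γ) for generic λ, γ ∈ (0,1); in particular, there exist λ, γ ∈ (0,1) with (2-λ+γλ)/(4-2λ+3γλ) ≠ (2-2γ)/(2-γ). -/

import Mathlib

/-- in the two-state example, the normalized hindsight Q-learning
prediction satisfies `Q₁₁/(Q₁₁+Q₁₂) = (2-λ+γλ)/(4-2λ+3γλ)` for all `λ, γ ∈ (0,1)`,
and there exist `λ, γ ∈ (0,1)` for which it differs from the normalized true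
discounted occupancy `(2-2γ)/(2-γ)`. -/
theorem normalized_q_differs_from_occupancy :
    (∀ γ lam : ℝ, γ ∈ Set.Ioo (0:ℝ) 1 → lam ∈ Set.Ioo (0:ℝ) 1 →
      ((2 - 2 * lam) / (2 - γ * lam)) /
        ((2 - 2 * lam) / (2 - γ * lam) +
          2 * (1 - lam) * (2 - lam + 2 * γ * lam) /
            ((2 - γ * lam) * (2 - lam + γ * lam)))
        = (2 - lam + γ * lam) / (4 - 2 * lam + 3 * γ * lam)) ∧
    (∃ γ lam : ℝ, γ ∈ Set.Ioo (0:ℝ) 1 ∧ lam ∈ Set.Ioo (0:ℝ) 1 ∧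
      (2 - lam + γ * lam) / (4 - 2 * lam + 3 * γ * lam) ≠ (2 - 2 * γ) / (2 - γ)) := by
  constructor
  · rintro γ lam ⟨hγ0, hγ1⟩ ⟨hl0, hl1⟩
    have h1 : (2 : ℝ) - γ * lam > 0 := by nlinarith
    have h2 : (2 : ℝ) - lam + γ * lam > 0 := by nlinarith
    have h3 : (1 : ℝ) - lam > 0 := by linarith
    have h4 : (4 : ℝ) - 2 * lam + 3 * γ * lam > 0 := by nlinarith
    have hsum : (2 - 2 * lam) / (2 - γ * lam) +
        2 * (1 - lam) * (2 - lam + 2 * γ * lam) /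
          ((2 - γ * lam) * (2 - lam + γ * lam))
        = (2 * (1 - lam) * (4 - 2 * lam + 3 * γ * lam)) /
          ((2 - γ * lam) * (2 - lam + γ * lam)) := by
      rw [div_add_div _ _ h1.ne' (mul_pos h1 h2).ne', div_eq_div_iff (mul_ne_zero h1.ne' (mul_pos h1 h2).ne') (mul_pos h1 h2).ne']
      ring
    rw [hsum, div_div_div_eq]
    rw [show (2 - 2*lam) * ((2 - γ*lam) * (2 - lam + γ*lam)) = ((2 - γ*lam)*(2*(1-lam))) * (2 - lam + γ*lam) by ring,
        show (2 - γ*lam) * (2 * (1-lam) * (4 - 2*lam + 3*γ*lam)) = ((2 - γ*lam)*(2*(1-lam))) * (4 - 2*lam + 3*γ*lam) by ring]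
    rw [mul_div_mul_left _ _ (by positivity)]
  · exact ⟨1/2, 1/2, ⟨by norm_num, by norm_num⟩, ⟨by norm_num, by norm_num⟩, by norm_num⟩
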